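/- (Theorem 3.3) Let L be a non-metabelian graded Lie algebra of maximal class over a field F of prime characteristic p, with setup elements x, y, first constituent length ℓ = 2q where q is a power of p, and constituent lengths ℓ = ℓ_1, ℓ_2, ℓ_3, … as in the recursive definition. Then every constituent length ℓ_r equals either 2q, or 2q − p^s for some integer s ≥ 0 with p^s ≤ q. -/

import Mathlib

/-- Left-normed bracket of `a` with `n` copies of `b`:
`lnb a b n = [a b … b]` with `n` occurrences of `b`. -/
def lnb {L : Type*} [LieRing L] (a b : L) : ℕ → L
  | 0 => a
  | n + 1 => ⁅lnb a b n, b⁆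

/-- `Lc` is a grading of `L` (indexed by `ℕ`, with trivial component in degree `0`)
making `L` an (infinite-dimensional) graded Lie algebra of maximal class:
`L` is the internal direct sum of the `Lc i`, `⁅Lc i, Lc j⁆ ⊆ Lc (i+j)`,
`dim (Lc 1) = 2`, `dim (Lc i) = 1` for `i ≥ 2`, and
`Lc (i+1) = span {⁅u, w⁆ : u ∈ Lc i, w ∈ Lc 1}` for `i ≥ 1`. -/
structure IsMaxClassGrading (F : Type*) [Field F] (L : Type*) [LieRing L] [LieAlgebra F L]
    (Lc : ℕ → Submodule F L) : Prop where
  zero : Lc 0 = ⊥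
  internal : DirectSum.IsInternal Lc
  bracket_mem : ∀ i j : ℕ, ∀ u ∈ Lc i, ∀ w ∈ Lc j, ⁅u, w⁆ ∈ Lc (i + j)
  dim_one : Module.finrank F (Lc 1) = 2
  dim_rest : ∀ i : ℕ, 2 ≤ i → Module.finrank F (Lc i) = 1
  gen : ∀ i : ℕ, 1 ≤ i →
    Lc (i + 1) = Submodule.span F {z | ∃ u ∈ Lc i, ∃ w ∈ Lc 1, z = ⁅u, w⁆}

/-- The standard setup for a non-metabelian graded Lie algebra of maximal class:
`y ∈ L_1` is nonzero and centralizes `L_2`, `x ∈ L_1` is not a scalar multiple of `y`,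
the first constituent length `ℓ` is positive with `[y x^i y] = 0` for `0 ≤ i < ℓ−1` and
`[y x^{ℓ−1} y] ≠ 0`, and `x` is normalized so that `[y x^ℓ] = 0`. -/
structure MaxClassSetup {F : Type*} [Field F] {L : Type*} [LieRing L] [LieAlgebra F L]
    (Lc : ℕ → Submodule F L) (x y : L) (ℓ : ℕ) : Prop where
  y_mem : y ∈ Lc 1
  y_ne : y ≠ 0
  y_central : ∀ u ∈ Lc 2, ⁅u, y⁆ = 0
  x_mem : x ∈ Lc 1
  x_not_mul : ∀ c : F, x ≠ c • y
  ell_pos : 0 < ℓ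
  first_const : ∀ i : ℕ, i < ℓ - 1 → ⁅lnb y x i, y⁆ = 0
  first_const_ne : ⁅lnb y x (ℓ - 1), y⁆ ≠ 0
  normalized : lnb y x ℓ = 0

/-- The sequences `(ℓ_r)_{r≥1}` of constituent lengths and `(v_r)_{r≥1}` of
distinguished homogeneous elements: `ℓ_1 = ℓ`, `v_1 = [y x^{ℓ−1}]`, and for `r ≥ 2`,
`ℓ_r > 0`, `[v_{r−1} y x^i y] = 0` for `0 ≤ i < ℓ_r − 1`,
`v_r = [v_{r−1} y x^{ℓ_r − 1}]`, and `[v_r y] ≠ 0`. -/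
structure ConstituentSeq {L : Type*} [LieRing L]
    (x y : L) (ℓ : ℕ) (l : ℕ → ℕ) (v : ℕ → L) : Prop where
  l_one : l 1 = ℓ
  v_one : v 1 = lnb y x (ℓ - 1)
  l_pos : ∀ r : ℕ, 2 ≤ r → 0 < l r
  const : ∀ r : ℕ, 2 ≤ r → ∀ i : ℕ, i < l r - 1 → ⁅lnb ⁅v (r - 1), y⁆ x i, y⁆ = 0
  v_def : ∀ r : ℕ, 2 ≤ r → v r = lnb ⁅v (r - 1), y⁆ x (l r - 1)
  const_end : ∀ r : ℕ, 2 ≤ r → ⁅v r, y⁆ ≠ 0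

/-! ### Auxiliary number-theoretic lemmas -/

open Finset

lemma lucas_helper_aux (p : ℕ) (hp : p.Prime) :
    ∀ f b : ℕ, ¬ p ∣ b → ¬ p ∣ Nat.choose (p ^ f * b + (p ^ f - 1)) (p ^ f) := by
  haveI : Fact p.Prime := ⟨hp⟩
  intro f
  induction f with
  | zero => intro b hb; simpa [Nat.choose_one_right] using hb
  | succ f ih =>
    intro b hb
    have hppos : 0 < p := hp.pos
    have hp1 : 1 < p := hp.one_lt
    have hPpos : 0 < p ^ f := pow_pos hppos f
    set P := p ^ f with hP
    set N := p ^ (f+1) * b + (p ^ (f+1) - 1) with hNdef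
    have hN : N = (p - 1) + (P * b + (P - 1)) * p := by
      simp only [hNdef, hP, pow_succ]
      have h2 : 1 ≤ p ^ f * p := Nat.one_le_iff_ne_zero.mpr (by positivity)
      have h3 : 1 ≤ p ^ f := hPpos
      zify [h3, h2, hppos]
      ring
    have hmod : N % p = p - 1 := by
      rw [hN, Nat.add_mul_mod_self_right, Nat.mod_eq_of_lt (by omega)]
    have hdiv : N / p = P * b + (P - 1) := by
      rw [hN, Nat.add_mul_div_right _ _ hppos, Nat.div_eq_of_lt (by omega), Nat.zero_add]
    have hKmod : (p ^ (f+1)) % p = 0 := by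
      rw [pow_succ, Nat.mul_mod_left]
    have hKdiv : (p ^ (f+1)) / p = P := by
      rw [pow_succ, Nat.mul_div_cancel _ hppos]
    have key := @Choose.choose_modEq_choose_mod_mul_choose_div_nat N (p ^ (f+1)) p _
    rw [hmod, hdiv, hKmod, hKdiv, Nat.choose_zero_right, one_mul] at key
    intro hdvd
    exact ih b hb (Nat.modEq_zero_iff_dvd.mp (key.symm.trans (Nat.modEq_zero_iff_dvd.mpr hdvd)))

lemma carry_force_aux (p T a : ℕ) (hp : p.Prime) (hT : 2 ≤ T)
    (h : ∀ k, 1 ≤ k → k < T → p ∣ Nat.choose (a + k) k) :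
    p ^ (Nat.clog p T) ∣ a + 1 := by
  haveI : Fact p.Prime := ⟨hp⟩
  have hp1 : 1 < p := hp.one_lt
  by_contra hnd
  set e := Nat.clog p T with he
  set f := padicValNat p (a + 1) with hf
  have hfe : f < e := by
    by_contra hfe
    push_neg at hfe
    exact hnd (dvd_trans (pow_dvd_pow p hfe) pow_padicValNat_dvd)
  have hdvd1 : p ^ f ∣ a + 1 := pow_padicValNat_dvd
  have hnd2 : ¬ p ^ (f + 1) ∣ a + 1 := pow_succ_padicValNat_not_dvd (by omega)
  obtain ⟨b, hb⟩ := hdvd1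
  have hpb : ¬ p ∣ b := by
    rintro ⟨c, hc⟩
    exact hnd2 ⟨c, by rw [hb, hc, pow_succ]; ring⟩
  have hPpos : 0 < p ^ f := pow_pos hp.pos f
  have hbpos : 0 < b := by
    rcases Nat.eq_zero_or_pos b with h0 | h0
    · subst h0; simp at hb
    · exact h0
  have ha : a + p ^ f = p ^ f * b + (p ^ f - 1) := by
    have : 1 ≤ p ^ f * b := Nat.one_le_iff_ne_zero.mpr (by positivity)
    omega
  have hlt : p ^ f < T := by
    calc p ^ f ≤ p ^ (e - 1) := Nat.pow_le_pow_right hp.pos (by omega)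
    _ < T := Nat.pow_pred_clog_lt_self hp1 (by omega)
  have happ := h (p ^ f) hPpos hlt
  rw [ha] at happ
  exact lucas_helper_aux p hp f b hpb happ

lemma nt_main_aux (p m q lp R : ℕ) (hp : p.Prime) (hm : 1 ≤ m) (hqm : q = p ^ m)
    (h1 : 1 ≤ lp) (h2 : lp ≤ 2 * q) (hR : q ≤ R)
    (hdvd : ∀ k, 1 ≤ k → lp + k ≤ 2 * q - 1 → k ≤ R - 1 → p ∣ Nat.choose (lp - 1 + k) k) :
    lp = 2 * q ∨ ∃ s, p ^ s ≤ q ∧ lp = 2 * q - p ^ s := by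
  have hp1 : 1 < p := hp.one_lt
  have hq2 : 2 ≤ q := by
    calc 2 ≤ p := hp.two_le
    _ = p ^ 1 := (pow_one p).symm
    _ ≤ p ^ m := Nat.pow_le_pow_right hp.pos hm
    _ = q := hqm.symm
  set t := 2 * q - lp with ht
  rcases Nat.eq_zero_or_pos t with ht0 | htpos
  · left; omega
  rcases eq_or_lt_of_le (Nat.succ_le_of_lt htpos) with ht1 | ht2
  · right; exact ⟨0, by simpa using (by omega : 1 ≤ q), by rw [pow_zero]; omega⟩
  have ht2' : 2 ≤ t := ht2
  rcases le_or_gt t q with htq | htq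
  · have key : p ^ (Nat.clog p t) ∣ (lp - 1) + 1 := by
      apply carry_force_aux p t (lp - 1) hp ht2'
      intro k hk1 hk2
      exact hdvd k hk1 (by omega) (by omega)
    set e := Nat.clog p t with he
    have hte : t ≤ p ^ e := Nat.le_pow_clog hp1 t
    have hem : e ≤ m := by
      have h3 : p ^ (e - 1) < t := Nat.pow_pred_clog_lt_self hp1 ht2'
      have h4 : p ^ (e - 1) < p ^ m := lt_of_lt_of_le h3 (by omega)
      have := (Nat.pow_lt_pow_iff_right hp1).mp h4
      omega
    have hd2q : p ^ e ∣ 2 * q := by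
      rw [hqm]
      exact Dvd.dvd.mul_left (pow_dvd_pow p hem) 2
    have hdlp : p ^ e ∣ lp := by
      have h5 : (lp - 1) + 1 = lp := by omega
      rwa [h5] at key
    have hdt : p ^ e ∣ t := by
      rw [ht]
      exact Nat.dvd_sub hd2q hdlp
    have : p ^ e ≤ t := Nat.le_of_dvd htpos hdt
    right
    exact ⟨e, by omega, by omega⟩
  · exfalso
    have key : p ^ (Nat.clog p q) ∣ (lp - 1) + 1 := by
      apply carry_force_aux p q (lp - 1) hp hq2
      intro k hk1 hk2
      exact hdvd k hk1 (by omega) (by omega)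
    rw [hqm, Nat.clog_pow _ _ hp1, ← hqm] at key
    have hlp' : (lp - 1) + 1 = lp := by omega
    rw [hlp'] at key
    have hd2q : q ∣ 2 * q := dvd_mul_left q 2
    have hdt : q ∣ t := Nat.dvd_sub hd2q key
    obtain ⟨c, hc⟩ := hdt
    have hc2 : 2 ≤ c := by
      rcases Nat.lt_or_ge c 2 with h | h
      · interval_cases c <;> omega
      · exact h
    have : 2 * q ≤ t := by
      calc 2 * q = q * 2 := by ring
      _ ≤ q * c := Nat.mul_le_mul_left q hc2
      _ = t := hc.symm
    omega

/-! ### The expansion identity and `lnb` lemmas -/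

def coefZaux (n i : ℕ) : ℤ := (-1) ^ (n + i) * (n.choose i : ℤ)

lemma coefZaux_top (n : ℕ) : coefZaux n (n + 1) = 0 := by
  simp [coefZaux, Nat.choose_eq_zero_of_lt (Nat.lt_succ_self n)]

lemma coefZaux_zero_succ (n : ℕ) : coefZaux (n + 1) 0 = - coefZaux n 0 := by
  simp [coefZaux, pow_succ]

lemma coefZaux_succ_succ (n i : ℕ) :
    coefZaux (n + 1) (i + 1) = coefZaux n i - coefZaux n (i + 1) := by
  simp only [coefZaux, Nat.choose_succ_succ n i]
  have h1 : (-1 : ℤ) ^ (n + 1 + (i + 1)) = (-1) ^ (n + i) := by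
    rw [show n + 1 + (i + 1) = (n + i) + 2 from by ring, pow_add]; norm_num
  have h2 : (-1 : ℤ) ^ (n + (i + 1)) = - (-1) ^ (n + i) := by
    rw [show n + (i + 1) = (n + i) + 1 from by ring, pow_add]; norm_num
  rw [h1, h2]
  push_cast
  ring

lemma sum_shift_aux {M : Type*} [AddCommGroup M] (c c' : ℕ → ℤ) (B : ℕ → M) (n : ℕ)
    (h0 : c' 0 = - c 0) (hs : ∀ i, c' (i + 1) = c i - c (i + 1)) (htop : c (n + 1) = 0) :
    ∑ i ∈ range (n + 2), c' i • B i
      = ∑ i ∈ range (n + 1), c i • B (i + 1) - ∑ i ∈ range (n + 1), c i • B i := by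
  rw [Finset.sum_range_succ' (fun i => c' i • B i) (n + 1)]
  have hext : ∑ i ∈ range (n + 1), c i • B i = ∑ i ∈ range (n + 2), c i • B i := by
    rw [Finset.sum_range_succ (fun i => c i • B i) (n + 1), htop, zero_smul, add_zero]
  rw [hext, Finset.sum_range_succ' (fun i => c i • B i) (n + 1)]
  simp only [hs, h0, sub_smul, neg_smul]
  rw [Finset.sum_sub_distrib]
  abel

section ExpandAux
variable {L : Type*} [LieRing L]

lemma lnb_zero_elt (b : L) (n : ℕ) : lnb (0 : L) b n = 0 := by
  induction n with
  | zero => rfl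
  | succ n ih => show ⁅lnb (0:L) b n, b⁆ = 0; rw [ih, zero_lie]

lemma lnb_add (a b : L) (m : ℕ) : ∀ n, lnb a b (m + n) = lnb (lnb a b m) b n := by
  intro n
  induction n with
  | zero => rfl
  | succ n ih =>
    show lnb a b (m + n + 1) = ⁅lnb (lnb a b m) b n, b⁆
    rw [← ih]; rfl

lemma expand_bracket_aux (x y : L) (s : L) :
    ∀ n : ℕ, ⁅s, lnb y x n⁆ =
      ∑ i ∈ Finset.range (n + 1), coefZaux n i • lnb ⁅lnb s x (n - i), y⁆ x i := by
  intro n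
  induction n generalizing s with
  | zero => simp [lnb, coefZaux]
  | succ n ih =>
    have step : ⁅s, lnb y x (n+1)⁆ = ⁅⁅s, lnb y x n⁆, x⁆ - ⁅⁅s, x⁆, lnb y x n⁆ := by
      show ⁅s, ⁅lnb y x n, x⁆⁆ = _
      rw [leibniz_lie]
      rw [show ⁅lnb y x n, ⁅s, x⁆⁆ = -⁅⁅s, x⁆, lnb y x n⁆ from (lie_skew _ _).symm]
      abel
    rw [step, ih s, ih ⁅s, x⁆]
    have hsum_lie : ∀ (f : ℕ → L) (t : Finset ℕ), ⁅∑ i ∈ t, f i, x⁆ = ∑ i ∈ t, ⁅f i, x⁆ := by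
      intro f t
      exact map_sum (AddMonoidHom.mk' (fun w => ⁅w, x⁆) (fun a b => add_lie a b x)) f t
    rw [hsum_lie]
    have e1 : ∀ i ∈ Finset.range (n+1),
        ⁅coefZaux n i • lnb ⁅lnb s x (n - i), y⁆ x i, x⁆
          = coefZaux n i • lnb ⁅lnb s x (n + 1 - (i + 1)), y⁆ x (i + 1) := by
      intro i hi
      rw [zsmul_lie]
      have h3 : n + 1 - (i + 1) = n - i := by omega
      rw [h3]
      rfl
    have e2 : ∀ i ∈ Finset.range (n+1),
        coefZaux n i • lnb ⁅lnb ⁅s, x⁆ x (n - i), y⁆ x i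
          = coefZaux n i • lnb ⁅lnb s x (n + 1 - i), y⁆ x i := by
      intro i hi
      simp only [mem_range] at hi
      have h2 : lnb ⁅s, x⁆ x (n - i) = lnb s x (n + 1 - i) := by
        have h1 : lnb s x 1 = ⁅s, x⁆ := rfl
        rw [show n + 1 - i = 1 + (n - i) from by omega, lnb_add, h1]
      rw [h2]
    rw [Finset.sum_congr rfl e1, Finset.sum_congr rfl e2]
    exact (sum_shift_aux (coefZaux n) (coefZaux (n+1))
      (fun i => lnb ⁅lnb s x (n + 1 - i), y⁆ x i) n
      (coefZaux_zero_succ n) (coefZaux_succ_succ n) (coefZaux_top n)).symm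

end ExpandAux

/-- Theorem 3.3: if the first constituent has length `2q`, `q` a power of the
characteristic `p`, then every constituent length equals `2q` or `2q − p^s` with
`p^s ≤ q`. -/
theorem constituent_lengths {F : Type*} [Field F] {L : Type*} [LieRing L] [LieAlgebra F L]
    (p : ℕ) (hp : p.Prime) (hchar : CharP F p)
    (Lc : ℕ → Submodule F L) (hL : IsMaxClassGrading F L Lc)
    (x y : L) (ℓ q : ℕ) (hq : ∃ m : ℕ, q = p ^ m) (hℓq : ℓ = 2 * q)
    (hsetup : MaxClassSetup Lc x y ℓ)
    (l : ℕ → ℕ) (v : ℕ → L) (hseq : ConstituentSeq x y ℓ l v) :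
    ∀ r : ℕ, 1 ≤ r → l r = 2 * q ∨ ∃ s : ℕ, p ^ s ≤ q ∧ l r = 2 * q - p ^ s := by
  classical
  obtain ⟨m, hqm⟩ := hq
  rcases Nat.eq_zero_or_pos m with hm0 | hm
  · -- q = 1 is impossible
    exfalso
    have hq1 : q = 1 := by rw [hqm, hm0, pow_zero]
    have h2 : lnb y x 1 ∈ Lc 2 := by
      have h := hL.bracket_mem 1 1 y hsetup.y_mem x hsetup.x_mem
      exact h
    have h0 : ⁅lnb y x 1, y⁆ = 0 := hsetup.y_central _ h2
    have hne := hsetup.first_const_ne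
    rw [hℓq, hq1, show 2 * 1 - 1 = 1 from by norm_num] at hne
    exact hne h0
  -- basic membership lemma
  have hlnb_mem : ∀ (a : L) (i : ℕ), a ∈ Lc i → ∀ n, lnb a x n ∈ Lc (i + n) := by
    intro a i ha n
    induction n with
    | zero => simpa [lnb] using ha
    | succ n ihn =>
      have h := hL.bracket_mem (i + n) 1 _ ihn x hsetup.x_mem
      show ⁅lnb a x n, x⁆ ∈ Lc (i + (n + 1))
      rw [show i + (n + 1) = i + n + 1 from by omega]
      exact h
  -- each v r is homogeneous of some positive degree
  have hdeg : ∀ r, 1 ≤ r → ∃ d, 1 ≤ d ∧ v r ∈ Lc d := by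
    intro r hr
    induction r, hr using Nat.le_induction with
    | base =>
      refine ⟨1 + (ℓ - 1), by omega, ?_⟩
      rw [hseq.v_one]
      exact hlnb_mem y 1 hsetup.y_mem (ℓ - 1)
    | succ r hr ihd =>
      obtain ⟨d, hd1, hdm⟩ := ihd
      refine ⟨(d + 1) + (l (r+1) - 1), by omega, ?_⟩
      have hv := hseq.v_def (r+1) (by omega)
      rw [show r + 1 - 1 = r from by omega] at hv
      rw [hv]
      exact hlnb_mem _ _ (hL.bracket_mem d 1 _ hdm y hsetup.y_mem) (l (r+1) - 1)
  intro r hr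
  induction r, hr using Nat.le_induction with
  | base =>
    left
    rw [hseq.l_one]
    exact hℓq
  | succ r hr ih =>
    have hr2 : 2 ≤ r + 1 := by omega
    have hrr : r + 1 - 1 = r := by omega
    set lp := l (r + 1) with hlp
    have hlpos : 0 < lp := hseq.l_pos (r+1) hr2
    -- constituent r+1 facts
    have hW1 : ∀ j, j < lp - 1 → ⁅lnb ⁅v r, y⁆ x j, y⁆ = 0 := by
      intro j hj
      have h := hseq.const (r+1) hr2 j (by rw [← hlp]; exact hj)
      rwa [hrr] at h
    have hvdef : v (r+1) = lnb ⁅v r, y⁆ x (lp - 1) := by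
      have h := hseq.v_def (r+1) hr2
      rwa [hrr] at h
    have hW2 : ⁅lnb ⁅v r, y⁆ x (lp - 1), y⁆ ≠ 0 := by
      rw [← hvdef]
      exact hseq.const_end (r+1) hr2
    -- constituent r facts
    have hF1 : ⁅v r, y⁆ ≠ 0 := by
      rcases eq_or_lt_of_le hr with hr1 | hr2'
      · rw [← hr1, hseq.v_one]; exact hsetup.first_const_ne
      · exact hseq.const_end r hr2'
    have hF2 : ∀ k, 1 ≤ k → k ≤ l r - 1 →
        ∃ s : L, (∀ i, i < k → ⁅lnb s x i, y⁆ = 0) ∧ lnb s x k = v r := by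
      rcases eq_or_lt_of_le hr with hr1 | hr2'
      · intro k hk1 hk2
        rw [← hr1, hseq.l_one] at hk2
        refine ⟨lnb y x (ℓ - 1 - k), ?_, ?_⟩
        · intro i hik
          rw [← lnb_add]
          apply hsetup.first_const
          omega
        · rw [← lnb_add, show ℓ - 1 - k + k = ℓ - 1 from by omega, ← hr1]
          exact hseq.v_one.symm
      · intro k hk1 hk2
        refine ⟨lnb ⁅v (r-1), y⁆ x (l r - 1 - k), ?_, ?_⟩
        · intro i hik
          rw [← lnb_add]
          exact hseq.const r hr2' _ (by omega)
        · rw [← lnb_add, show l r - 1 - k + k = l r - 1 from by omega]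
          exact (hseq.v_def r hr2').symm
    have hlr : q ≤ l r := by
      rcases ih with h | ⟨s, hs1, hs2⟩ <;> omega
    -- lambda
    obtain ⟨d, hd1, hdm⟩ := hdeg r hr
    have hym : ⁅v r, y⁆ ∈ Lc (d + 1) := hL.bracket_mem d 1 _ hdm y hsetup.y_mem
    have hxm : ⁅v r, x⁆ ∈ Lc (d + 1) := hL.bracket_mem d 1 _ hdm x hsetup.x_mem
    have hfr : Module.finrank F (Lc (d+1)) = 1 := hL.dim_rest (d+1) (by omega)
    obtain ⟨lam, hlam⟩ : ∃ c : F, ⁅v r, x⁆ = c • ⁅v r, y⁆ := by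
      have hb : (⟨⁅v r, y⁆, hym⟩ : Lc (d+1)) ≠ 0 := by
        simp only [ne_eq, Submodule.mk_eq_zero]
        exact hF1
      obtain ⟨c, hc⟩ := (finrank_eq_one_iff_of_nonzero' _ hb).mp hfr ⟨⁅v r, x⁆, hxm⟩
      refine ⟨c, ?_⟩
      have := Subtype.ext_iff.mp hc
      simpa using this.symm
    have hux : ∀ j, lnb (v r) x (j + 1) = lam • lnb ⁅v r, y⁆ x j := by
      intro j
      induction j with
      | zero => simpa [lnb] using hlam
      | succ j ihj =>
        show ⁅lnb (v r) x (j+1), x⁆ = lam • ⁅lnb ⁅v r, y⁆ x j, x⁆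
        rw [ihj, smul_lie]
    -- upper bound
    have hub : lp ≤ 2 * q := by
      by_contra hgt
      push_neg at hgt
      have h0 : lnb y x (2*q) = 0 := by rw [← hℓq]; exact hsetup.normalized
      have hexp := expand_bracket_aux x y (v r) (2*q)
      rw [h0, lie_zero] at hexp
      have hsingle : ∑ i ∈ Finset.range (2*q+1),
          coefZaux (2*q) i • lnb ⁅lnb (v r) x (2*q - i), y⁆ x i
          = lnb ⁅v r, y⁆ x (2*q) := by
        rw [Finset.sum_eq_single (2*q)]
        · rw [show 2*q - 2*q = 0 from by omega]
          have hc1 : coefZaux (2*q) (2*q) = 1 := by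
            simp only [coefZaux, Nat.choose_self, Nat.cast_one, mul_one]
            exact Even.neg_one_pow ⟨2*q, by ring⟩
          rw [hc1, one_smul]
          rfl
        · intro i hi hne
          have hi' : i < 2*q := by
            simp only [Finset.mem_range] at hi
            omega
          have h1 : lnb (v r) x (2*q - i) = lam • lnb ⁅v r, y⁆ x (2*q - i - 1) := by
            rw [show 2*q - i = (2*q - i - 1) + 1 from by omega]
            exact hux _
          rw [h1, smul_lie, hW1 (2*q - i - 1) (by omega), smul_zero, lnb_zero_elt, smul_zero]
        · intro habs
          exact absurd (Finset.mem_range.mpr (by omega)) habs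
      rw [hsingle] at hexp
      have hzz : lnb ⁅v r, y⁆ x (lp - 1) = 0 := by
        rw [show lp - 1 = 2*q + (lp - 1 - 2*q) from by omega, lnb_add, ← hexp, lnb_zero_elt]
      exact hW2 (by rw [hzz, zero_lie])
    -- the binomial relations
    have hbin : ∀ k, 1 ≤ k → lp + k ≤ 2*q - 1 → k ≤ l r - 1 →
        p ∣ Nat.choose (lp - 1 + k) k := by
      intro k hk1 hk2 hk3
      obtain ⟨s, hs1, hs2⟩ := hF2 k hk1 hk3
      set n := lp - 1 + k with hn
      have hn1 : n < ℓ - 1 := by rw [hℓq]; omega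
      have hyg : ⁅y, lnb y x n⁆ = 0 := by
        rw [← lie_skew, hsetup.first_const n hn1, neg_zero]
      have hsy : ⁅s, y⁆ = 0 := by
        have h := hs1 0 hk1
        simpa [lnb] using h
      have hL0 : ⁅⁅s, y⁆, lnb y x n⁆ = 0 := by rw [hsy, zero_lie]
      have hcomm : ⁅⁅s, y⁆, lnb y x n⁆ = ⁅⁅s, lnb y x n⁆, y⁆ := by
        have h := leibniz_lie s y (lnb y x n)
        rw [hyg, lie_zero] at h
        have h2 : ⁅y, ⁅s, lnb y x n⁆⁆ = -⁅⁅s, lnb y x n⁆, y⁆ := (lie_skew _ _).symm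
        rw [h2] at h
        have h3 : ⁅⁅s, y⁆, lnb y x n⁆ - ⁅⁅s, lnb y x n⁆, y⁆ = 0 := by
          rw [sub_eq_add_neg]
          exact h.symm
        exact sub_eq_zero.mp h3
      have hexp := expand_bracket_aux x y s n
      have hsingle : ⁅s, lnb y x n⁆ = coefZaux n (lp - 1) • lnb ⁅v r, y⁆ x (lp - 1) := by
        rw [hexp, Finset.sum_eq_single (lp - 1)]
        · rw [show n - (lp - 1) = k from by omega, hs2]
        · intro i hi hne
          simp only [Finset.mem_range] at hi
          rcases lt_or_gt_of_ne hne with hlt | hgt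
          · have h1 : lnb s x (n - i) = lnb (v r) x (n - i - k) := by
              have e : n - i = k + (n - i - k) := by omega
              conv_lhs => rw [e]
              rw [lnb_add, hs2]
            have h2 : lnb (v r) x (n - i - k) = lam • lnb ⁅v r, y⁆ x (n - i - k - 1) := by
              rw [show n - i - k = (n - i - k - 1) + 1 from by omega]
              exact hux _
            rw [h1, h2, smul_lie, hW1 _ (by omega), smul_zero, lnb_zero_elt, smul_zero]
          · rw [hs1 (n - i) (by omega), lnb_zero_elt, smul_zero]
        · intro habs
          exact absurd (Finset.mem_range.mpr (by omega)) habs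
      rw [hcomm, hsingle, zsmul_lie] at hL0
      have hcast : ((coefZaux n (lp - 1) : ℤ) : F) • ⁅lnb ⁅v r, y⁆ x (lp - 1), y⁆ = 0 := by
        rw [Int.cast_smul_eq_zsmul]
        exact hL0
      have hcoef0 : ((coefZaux n (lp - 1) : ℤ) : F) = 0 := by
        rcases smul_eq_zero.mp hcast with h | h
        · exact h
        · exact absurd h hW2
      have hch : ((Nat.choose n (lp - 1) : ℕ) : F) = 0 := by
        have hexpand : ((coefZaux n (lp - 1) : ℤ) : F)
            = (-1 : F) ^ (n + (lp - 1)) * ((Nat.choose n (lp - 1) : ℕ) : F) := by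
          simp [coefZaux]
        rw [hexpand] at hcoef0
        rcases mul_eq_zero.mp hcoef0 with h | h
        · exact absurd h (pow_ne_zero _ (neg_ne_zero.mpr one_ne_zero))
        · exact h
      have hdvd : p ∣ Nat.choose n (lp - 1) := (CharP.cast_eq_zero_iff F p _).mp hch
      have hsymm : Nat.choose n k = Nat.choose n (lp - 1) := by
        rw [show k = n - (lp - 1) from by omega]
        exact Nat.choose_symm (by omega)
      rw [hsymm]
      exact hdvd
    exact nt_main_aux p m q lp (l r) hp hm hqm hlpos hub hlr hbin
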